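/- Let U : Ω × Ω → ℝ be symmetric measurable with ‖U‖_∞ ≤ 2B and ‖D_{|U|}‖_∞ ≤ 2D on a σ-finite measure space (Ω,F,μ), and let μ' ≤ μ with μ − r ≤ μ', induced by a density h : Ω → [0,1] with ‖1−h‖_{1,μ} ≤ r. Then ‖U‖_{2→2,μ} ≤ ‖U‖_{2→2,μ'} + 4√(B D r). -/

import Mathlib

open MeasureTheory ENNReal Function

section aux
variable {Ω : Type*} [MeasurableSpace Ω]

private lemma lem_CS2 (ν : Measure Ω) {f g : Ω → ℝ≥0∞} (hf : AEMeasurable f ν)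
    (hg : AEMeasurable g ν) :
    ∫⁻ a, f a * g a ∂ν ≤
      (∫⁻ a, f a ^ (2:ℝ) ∂ν) ^ (1/2:ℝ) * (∫⁻ a, g a ^ (2:ℝ) ∂ν) ^ (1/2:ℝ) := by
  simpa using ENNReal.lintegral_mul_le_Lp_mul_Lq ν (p := 2) (q := 2)
    Real.HolderConjugate.two_two hf hg

private lemma rpow_half_sq (x : ℝ≥0∞) : (x ^ (1/2:ℝ)) ^ (2:ℝ) = x := by
  rw [← ENNReal.rpow_mul]; norm_num

private lemma split_half (x y : ℝ≥0∞) : x * y = x ^ (1/2:ℝ) * (x ^ (1/2:ℝ) * y) := by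
  rw [← mul_assoc, ← ENNReal.rpow_add_of_nonneg _ _ (by norm_num) (by norm_num)]
  norm_num

/-- inner bound: `∫⁻ y, |U x y| q y ∂ν ≤ (2B·2D)^(1/2)` -/
private lemma lem_inner {ν : Measure Ω} {B D : ℝ} {U : Ω → Ω → ℝ}
    (hmeas : Measurable (Function.uncurry U))
    (hUbdd : ∀ x y, |U x y| ≤ 2 * B)
    (hmarg : ∀ x, (∫⁻ y, ENNReal.ofReal |U x y| ∂ν) ≤ ENNReal.ofReal (2 * D))
    {q : Ω → ℝ≥0∞} (hq : Measurable q) (hq2 : ∫⁻ y, q y ^ (2:ℝ) ∂ν ≤ 1) (x : Ω) :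
    ∫⁻ y, ENNReal.ofReal |U x y| * q y ∂ν
      ≤ (ENNReal.ofReal (2*B) * ENNReal.ofReal (2*D)) ^ (1/2:ℝ) := by
  have hUx : Measurable fun y => ENNReal.ofReal |U x y| :=
    ENNReal.measurable_ofReal.comp (hmeas.of_uncurry_left).abs
  have hUx2 : Measurable fun y => ENNReal.ofReal |U x y| ^ (1/2:ℝ) :=
    hUx.pow_const _
  calc ∫⁻ y, ENNReal.ofReal |U x y| * q y ∂ν
      = ∫⁻ y, (fun y => ENNReal.ofReal |U x y| ^ (1/2:ℝ)) y *
          ((fun y => ENNReal.ofReal |U x y| ^ (1/2:ℝ) * q y) y) ∂ν :=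
        lintegral_congr fun y => split_half _ _
    _ ≤ (∫⁻ y, (ENNReal.ofReal |U x y| ^ (1/2:ℝ)) ^ (2:ℝ) ∂ν) ^ (1/2:ℝ) *
        (∫⁻ y, (ENNReal.ofReal |U x y| ^ (1/2:ℝ) * q y) ^ (2:ℝ) ∂ν) ^ (1/2:ℝ) :=
        lem_CS2 ν hUx2.aemeasurable (hUx2.mul hq).aemeasurable
    _ ≤ (ENNReal.ofReal (2*D)) ^ (1/2:ℝ) * (ENNReal.ofReal (2*B)) ^ (1/2:ℝ) := by
        refine mul_le_mul' (ENNReal.rpow_le_rpow ?_ (by norm_num))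
          (ENNReal.rpow_le_rpow ?_ (by norm_num))
        · calc ∫⁻ y, (ENNReal.ofReal |U x y| ^ (1/2:ℝ)) ^ (2:ℝ) ∂ν
              = ∫⁻ y, ENNReal.ofReal |U x y| ∂ν := lintegral_congr fun y => rpow_half_sq _
            _ ≤ ENNReal.ofReal (2*D) := hmarg x
        · calc ∫⁻ y, (ENNReal.ofReal |U x y| ^ (1/2:ℝ) * q y) ^ (2:ℝ) ∂ν
              = ∫⁻ y, ENNReal.ofReal |U x y| * q y ^ (2:ℝ) ∂ν := by
                refine lintegral_congr fun y => ?_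
                rw [ENNReal.mul_rpow_of_nonneg _ _ (by norm_num), rpow_half_sq]
            _ ≤ ∫⁻ y, ENNReal.ofReal (2*B) * q y ^ (2:ℝ) ∂ν := by
                refine lintegral_mono fun y => ?_
                exact mul_le_mul' (ENNReal.ofReal_le_ofReal (hUbdd x y)) le_rfl
            _ = ENNReal.ofReal (2*B) * ∫⁻ y, q y ^ (2:ℝ) ∂ν :=
                lintegral_const_mul _ (hq.pow_const _)
            _ ≤ ENNReal.ofReal (2*B) * 1 := mul_le_mul' le_rfl hq2
            _ = ENNReal.ofReal (2*B) := mul_one _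
    _ = (ENNReal.ofReal (2*B) * ENNReal.ofReal (2*D)) ^ (1/2:ℝ) := by
        rw [ENNReal.mul_rpow_of_nonneg _ _ (by norm_num), mul_comm]

end aux

section aux2
variable {Ω : Type*} [MeasurableSpace Ω]

/-- master bound: `∫⁻ x, p x * (∫⁻ y, |U x y| q y) ≤ 2D`. -/
private lemma lem_master {ν : Measure Ω} [SFinite ν] {D : ℝ} {U : Ω → Ω → ℝ}
    (hmeas : Measurable (Function.uncurry U))
    (hmargx : ∀ x, (∫⁻ y, ENNReal.ofReal |U x y| ∂ν) ≤ ENNReal.ofReal (2 * D))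
    (hmargy : ∀ y, (∫⁻ x, ENNReal.ofReal |U x y| ∂ν) ≤ ENNReal.ofReal (2 * D))
    {p q : Ω → ℝ≥0∞} (hp : Measurable p) (hq : Measurable q)
    (hp2 : ∫⁻ x, p x ^ (2:ℝ) ∂ν ≤ 1) (hq2 : ∫⁻ y, q y ^ (2:ℝ) ∂ν ≤ 1) :
    ∫⁻ x, p x * (∫⁻ y, ENNReal.ofReal |U x y| * q y ∂ν) ∂ν ≤ ENNReal.ofReal (2 * D) := by
  set eD := ENNReal.ofReal (2 * D) with heD
  have huEm : Measurable fun pr : Ω × Ω => ENNReal.ofReal |U pr.1 pr.2| :=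
    ENNReal.measurable_ofReal.comp hmeas.abs
  set R : Ω → ℝ≥0∞ := fun x => ∫⁻ y, ENNReal.ofReal |U x y| * q y ^ (2:ℝ) ∂ν with hR
  have hRm : Measurable R := by
    apply Measurable.lintegral_prod_right (f := fun x y => ENNReal.ofReal |U x y| * q y ^ (2:ℝ))
    exact huEm.mul ((hq.comp measurable_snd).pow_const _)
  have step1 : ∀ x, (∫⁻ y, ENNReal.ofReal |U x y| * q y ∂ν) ≤ eD ^ (1/2:ℝ) * R x ^ (1/2:ℝ) := by
    intro x
    have hUx : Measurable fun y => ENNReal.ofReal |U x y| :=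
      ENNReal.measurable_ofReal.comp (hmeas.of_uncurry_left).abs
    have hUx2 : Measurable fun y => ENNReal.ofReal |U x y| ^ (1/2:ℝ) := hUx.pow_const _
    calc ∫⁻ y, ENNReal.ofReal |U x y| * q y ∂ν
        = ∫⁻ y, (fun y => ENNReal.ofReal |U x y| ^ (1/2:ℝ)) y *
            ((fun y => ENNReal.ofReal |U x y| ^ (1/2:ℝ) * q y) y) ∂ν :=
          lintegral_congr fun y => split_half _ _
      _ ≤ (∫⁻ y, (ENNReal.ofReal |U x y| ^ (1/2:ℝ)) ^ (2:ℝ) ∂ν) ^ (1/2:ℝ) *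
          (∫⁻ y, (ENNReal.ofReal |U x y| ^ (1/2:ℝ) * q y) ^ (2:ℝ) ∂ν) ^ (1/2:ℝ) :=
          lem_CS2 ν hUx2.aemeasurable (hUx2.mul hq).aemeasurable
      _ = (∫⁻ y, ENNReal.ofReal |U x y| ∂ν) ^ (1/2:ℝ) * R x ^ (1/2:ℝ) := by
          congr 1
          · congr 1; exact lintegral_congr fun y => rpow_half_sq _
          · congr 1; refine lintegral_congr fun y => ?_
            rw [ENNReal.mul_rpow_of_nonneg _ _ (by norm_num), rpow_half_sq]
      _ ≤ eD ^ (1/2:ℝ) * R x ^ (1/2:ℝ) :=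
          mul_le_mul' (ENNReal.rpow_le_rpow (hmargx x) (by norm_num)) le_rfl
  have hRint : ∫⁻ x, R x ∂ν ≤ eD := by
    have hswap : ∫⁻ x, R x ∂ν = ∫⁻ y, ∫⁻ x, ENNReal.ofReal |U x y| * q y ^ (2:ℝ) ∂ν ∂ν := by
      refine lintegral_lintegral_swap ?_
      exact (huEm.mul ((hq.comp measurable_snd).pow_const _)).aemeasurable
    rw [hswap]
    calc ∫⁻ y, ∫⁻ x, ENNReal.ofReal |U x y| * q y ^ (2:ℝ) ∂ν ∂ν
        = ∫⁻ y, (∫⁻ x, ENNReal.ofReal |U x y| ∂ν) * q y ^ (2:ℝ) ∂ν := by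
          refine lintegral_congr fun y => ?_
          exact lintegral_mul_const'' _ ((huEm.comp (measurable_id.prodMk measurable_const)) :
            Measurable fun x => ENNReal.ofReal |U x y|).aemeasurable
      _ ≤ ∫⁻ y, eD * q y ^ (2:ℝ) ∂ν := lintegral_mono fun y => mul_le_mul' (hmargy y) le_rfl
      _ = eD * ∫⁻ y, q y ^ (2:ℝ) ∂ν := lintegral_const_mul _ (hq.pow_const _)
      _ ≤ eD * 1 := mul_le_mul' le_rfl hq2
      _ = eD := mul_one _
  have heDhalf : eD ^ (1/2:ℝ) ≠ ⊤ := ENNReal.rpow_ne_top_of_nonneg (by norm_num) ofReal_ne_top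
  calc ∫⁻ x, p x * (∫⁻ y, ENNReal.ofReal |U x y| * q y ∂ν) ∂ν
      ≤ ∫⁻ x, p x * (eD ^ (1/2:ℝ) * R x ^ (1/2:ℝ)) ∂ν :=
        lintegral_mono fun x => mul_le_mul' le_rfl (step1 x)
    _ = ∫⁻ x, eD ^ (1/2:ℝ) * (p x * R x ^ (1/2:ℝ)) ∂ν := by
        refine lintegral_congr fun x => ?_; ring
    _ = eD ^ (1/2:ℝ) * ∫⁻ x, p x * R x ^ (1/2:ℝ) ∂ν := lintegral_const_mul' _ _ heDhalf
    _ ≤ eD ^ (1/2:ℝ) * ((∫⁻ x, p x ^ (2:ℝ) ∂ν) ^ (1/2:ℝ) *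
          (∫⁻ x, (R x ^ (1/2:ℝ)) ^ (2:ℝ) ∂ν) ^ (1/2:ℝ)) :=
        mul_le_mul' le_rfl (lem_CS2 ν hp.aemeasurable (hRm.pow_const _).aemeasurable)
    _ ≤ eD ^ (1/2:ℝ) * (1 ^ (1/2:ℝ) * eD ^ (1/2:ℝ)) := by
        refine mul_le_mul' le_rfl (mul_le_mul' (ENNReal.rpow_le_rpow hp2 (by norm_num)) ?_)
        refine ENNReal.rpow_le_rpow ?_ (by norm_num)
        calc ∫⁻ x, (R x ^ (1/2:ℝ)) ^ (2:ℝ) ∂ν = ∫⁻ x, R x ∂ν :=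
              lintegral_congr fun x => rpow_half_sq _
          _ ≤ eD := hRint
    _ = eD := by
        rw [ENNReal.one_rpow, one_mul, ← ENNReal.rpow_add_of_nonneg _ _ (by norm_num) (by norm_num)]
        norm_num

end aux2

section aux3
variable {Ω : Type*} [MeasurableSpace Ω]

/-- cross bound : `∫⁻ x, (p x * w x) * (∫⁻ y, |U x y| q y) ≤ 2√(BDr)` -/
private lemma lem_cross {μ : Measure Ω} {B D r : ℝ} {U : Ω → Ω → ℝ}
    (hB : 0 ≤ B) (hD : 0 ≤ D) (hr : 0 ≤ r)
    (hmeas : Measurable (Function.uncurry U))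
    (hUbdd : ∀ x y, |U x y| ≤ 2 * B)
    (hmarg : ∀ x, (∫⁻ y, ENNReal.ofReal |U x y| ∂μ) ≤ ENNReal.ofReal (2 * D))
    {p q w : Ω → ℝ≥0∞} (hp : Measurable p) (hq : Measurable q) (hw : Measurable w)
    (hp2 : ∫⁻ x, p x ^ (2:ℝ) ∂μ ≤ 1) (hq2 : ∫⁻ y, q y ^ (2:ℝ) ∂μ ≤ 1)
    (hw1 : ∀ x, w x ≤ 1) (hwr : ∫⁻ x, w x ∂μ ≤ ENNReal.ofReal r) :
    ∫⁻ x, (p x * w x) * (∫⁻ y, ENNReal.ofReal |U x y| * q y ∂μ) ∂μ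
      ≤ ENNReal.ofReal (2 * Real.sqrt (B * D * r)) := by
  set C := (ENNReal.ofReal (2*B) * ENNReal.ofReal (2*D)) ^ (1/2:ℝ) with hC
  have hCne : C ≠ ⊤ := ENNReal.rpow_ne_top_of_nonneg (by norm_num)
    (ENNReal.mul_ne_top ofReal_ne_top ofReal_ne_top)
  have hw2 : ∫⁻ x, w x ^ (2:ℝ) ∂μ ≤ ENNReal.ofReal r := by
    refine le_trans (lintegral_mono fun x => ?_) hwr
    have : w x ^ (2:ℝ) = w x * w x := by
      rw [show (2:ℝ) = ((2:ℕ):ℝ) by norm_num, ENNReal.rpow_natCast]; ring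
    rw [this]
    exact mul_le_of_le_one_left (by positivity) (hw1 x)
  calc ∫⁻ x, (p x * w x) * (∫⁻ y, ENNReal.ofReal |U x y| * q y ∂μ) ∂μ
      ≤ ∫⁻ x, (p x * w x) * C ∂μ :=
        lintegral_mono fun x => mul_le_mul' le_rfl (lem_inner hmeas hUbdd hmarg hq hq2 x)
    _ = C * ∫⁻ x, p x * w x ∂μ := by
        rw [← lintegral_const_mul' _ _ hCne]
        exact lintegral_congr fun x => by ring
    _ ≤ C * ((∫⁻ x, p x ^ (2:ℝ) ∂μ) ^ (1/2:ℝ) * (∫⁻ x, w x ^ (2:ℝ) ∂μ) ^ (1/2:ℝ)) :=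
        mul_le_mul' le_rfl (lem_CS2 μ hp.aemeasurable hw.aemeasurable)
    _ ≤ C * (1 ^ (1/2:ℝ) * (ENNReal.ofReal r) ^ (1/2:ℝ)) :=
        mul_le_mul' le_rfl (mul_le_mul' (ENNReal.rpow_le_rpow hp2 (by norm_num))
          (ENNReal.rpow_le_rpow hw2 (by norm_num)))
    _ = ENNReal.ofReal ((2*B*(2*D)) ^ (1/2:ℝ)) * ENNReal.ofReal (r ^ (1/2:ℝ)) := by
        rw [ENNReal.one_rpow, one_mul, hC, ← ENNReal.ofReal_mul (by positivity),
          ENNReal.ofReal_rpow_of_nonneg (by positivity) (by norm_num),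
          ENNReal.ofReal_rpow_of_nonneg hr (by norm_num)]
    _ = ENNReal.ofReal (2 * Real.sqrt (B * D * r)) := by
        rw [← ENNReal.ofReal_mul (by positivity)]
        congr 1
        rw [← Real.sqrt_eq_rpow, ← Real.sqrt_eq_rpow, ← Real.sqrt_mul (by positivity)]
        rw [show 2*B*(2*D)*r = 2^2 * (B*D*r) by ring, Real.sqrt_mul (by positivity),
          Real.sqrt_sq (by norm_num)]

/-- Bound on an iterated Bochner double integral via the iterated lintegral of abs. -/
private lemma lem_abs_iint {ν : Measure Ω} [SFinite ν] {F : Ω → Ω → ℝ}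
    (hF : Measurable (Function.uncurry F)) {M : ℝ≥0∞} (hM : M ≠ ⊤)
    (hb : ∫⁻ x, ∫⁻ y, ENNReal.ofReal |F x y| ∂ν ∂ν ≤ M) :
    |∫ x, ∫ y, F x y ∂ν ∂ν| ≤ M.toReal := by
  have hsm : StronglyMeasurable fun x => ∫ y, F x y ∂ν :=
    hF.stronglyMeasurable.integral_prod_right'
  have h3 : ∀ x, ENNReal.ofReal |∫ y, F x y ∂ν| ≤ ∫⁻ y, ENNReal.ofReal |F x y| ∂ν := by
    intro x
    have h5 : ∫ y, |F x y| ∂ν = (∫⁻ y, ENNReal.ofReal |F x y| ∂ν).toReal :=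
      integral_eq_lintegral_of_nonneg_ae (Filter.Eventually.of_forall fun y => abs_nonneg _)
        (hF.of_uncurry_left).abs.aestronglyMeasurable
    have hax : |∫ y, F x y ∂ν| ≤ ∫ y, |F x y| ∂ν := by
      simpa [Real.norm_eq_abs] using norm_integral_le_integral_norm (fun y => F x y) (μ := ν)
    calc ENNReal.ofReal |∫ y, F x y ∂ν|
        ≤ ENNReal.ofReal ((∫⁻ y, ENNReal.ofReal |F x y| ∂ν).toReal) :=
          ENNReal.ofReal_le_ofReal (h5 ▸ hax)
      _ ≤ _ := ENNReal.ofReal_toReal_le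
  have h4 : (∫⁻ x, ENNReal.ofReal |∫ y, F x y ∂ν| ∂ν) ≤ M := le_trans (lintegral_mono h3) hb
  have h1 : |∫ x, ∫ y, F x y ∂ν ∂ν| ≤ ∫ x, |∫ y, F x y ∂ν| ∂ν := by
    simpa [Real.norm_eq_abs] using
      norm_integral_le_integral_norm (fun x => ∫ y, F x y ∂ν) (μ := ν)
  have h2 : ∫ x, |∫ y, F x y ∂ν| ∂ν = (∫⁻ x, ENNReal.ofReal |∫ y, F x y ∂ν| ∂ν).toReal :=
    integral_eq_lintegral_of_nonneg_ae (Filter.Eventually.of_forall fun x => abs_nonneg _)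
      hsm.measurable.abs.aestronglyMeasurable
  exact h1.trans (h2.le.trans (ENNReal.toReal_mono hM h4))

/-- `eLpNorm f 2 ν = 1` into lintegral form. -/
private lemma lem_elp {ν : Measure Ω} {f : Ω → ℝ} (h1 : eLpNorm f 2 ν = 1) :
    ∫⁻ x, (ENNReal.ofReal |f x|) ^ (2:ℝ) ∂ν = 1 := by
  rw [eLpNorm_eq_lintegral_rpow_enorm_toReal (by norm_num) (by norm_num)] at h1
  have h2 := congrArg (fun z : ℝ≥0∞ => z ^ (2:ℝ)) h1
  simp only [← ENNReal.rpow_mul, ENNReal.one_rpow] at h2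
  norm_num at h2
  calc ∫⁻ x, (ENNReal.ofReal |f x|) ^ (2:ℝ) ∂ν
      = ∫⁻ x, ‖f x‖ₑ ^ (2:ℕ) ∂ν := by
        refine lintegral_congr fun x => ?_
        rw [← Real.enorm_eq_ofReal_abs, ← ENNReal.rpow_natCast]
        norm_num
    _ = 1 := h2

end aux3

/-- The kernel norm `‖U‖_{2→2,ν}`: the operator norm of the integral operator with
kernel `U` on `L²(Ω, ν)`. -/
noncomputable def kernelNorm {Ω : Type*} [MeasurableSpace Ω] (ν : Measure Ω)
    (U : Ω → Ω → ℝ) : ℝ :=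
  sSup {r : ℝ | ∃ f g : Ω → ℝ, Measurable f ∧ Measurable g ∧
    eLpNorm f 2 ν = 1 ∧ eLpNorm g 2 ν = 1 ∧
    r = ∫ x, ∫ y, f x * U x y * g y ∂ν ∂ν}

section aux4
variable {Ω : Type*} [MeasurableSpace Ω]

private lemma kernelNorm_nonneg (ν : Measure Ω) (U : Ω → Ω → ℝ) : 0 ≤ kernelNorm ν U := by
  rw [kernelNorm]
  set S := {r : ℝ | ∃ f g : Ω → ℝ, Measurable f ∧ Measurable g ∧
    eLpNorm f 2 ν = 1 ∧ eLpNorm g 2 ν = 1 ∧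
    r = ∫ x, ∫ y, f x * U x y * g y ∂ν ∂ν} with hS
  by_cases hne : S.Nonempty
  · by_cases hbdd : BddAbove S
    · obtain ⟨a, ha⟩ := hne
      obtain ⟨f, g, hfm, hgm, hf1, hg1, hav⟩ := ha
      have hneg : -a ∈ S := by
        refine ⟨f, -g, hfm, hgm.neg, hf1, by rwa [eLpNorm_neg], ?_⟩
        simp only [Pi.neg_apply, mul_neg, integral_neg, hav]
      have h1 : a ≤ sSup S := le_csSup hbdd ⟨f, g, hfm, hgm, hf1, hg1, hav⟩
      have h2 : -a ≤ sSup S := le_csSup hbdd hneg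
      linarith
    · simp [Real.sSup_of_not_bddAbove hbdd]
  · simp [Set.not_nonempty_iff_eq_empty.mp hne]

end aux4

section auxmore
variable {Ω : Type*} [MeasurableSpace Ω]

private lemma ofReal_abs_integral_le {ν : Measure Ω} {φ : Ω → ℝ}
    (hφ : AEStronglyMeasurable φ ν) :
    ENNReal.ofReal |∫ y, φ y ∂ν| ≤ ∫⁻ y, ENNReal.ofReal |φ y| ∂ν := by
  have h5 : ∫ y, |φ y| ∂ν = (∫⁻ y, ENNReal.ofReal |φ y| ∂ν).toReal :=
    integral_eq_lintegral_of_nonneg_ae (Filter.Eventually.of_forall fun y => abs_nonneg _)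
      hφ.norm
  have hax : |∫ y, φ y ∂ν| ≤ ∫ y, |φ y| ∂ν := by
    simpa [Real.norm_eq_abs] using norm_integral_le_integral_norm φ (μ := ν)
  calc ENNReal.ofReal |∫ y, φ y ∂ν|
      ≤ ENNReal.ofReal ((∫⁻ y, ENNReal.ofReal |φ y| ∂ν).toReal) :=
        ENNReal.ofReal_le_ofReal (h5 ▸ hax)
    _ ≤ _ := ENNReal.ofReal_toReal_le

end auxmore

/-- Let `U : Ω × Ω → ℝ` be symmetric measurable with `‖U‖_∞ ≤ 2B` and
`‖D_{|U|}‖_∞ ≤ 2D` on a σ-finite measure space `(Ω, ℱ, μ)`, and let `μ'` be the measure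
with density `h : Ω → [0,1]` with respect to `μ`, where `‖1 − h‖_{1,μ} ≤ r` (so
`μ − r ≤ μ' ≤ μ`).  Then `‖U‖_{2→2,μ} ≤ ‖U‖_{2→2,μ'} + 4 √(B D r)`. -/
theorem stmt18 {Ω : Type*} [MeasurableSpace Ω]
    (μ : Measure Ω) [SigmaFinite μ]
    (B D r : ℝ) (hB : 0 ≤ B) (hD : 0 ≤ D) (hr : 0 ≤ r)
    (U : Ω → Ω → ℝ) (hmeas : Measurable (Function.uncurry U))
    (hsymm : ∀ x y, U x y = U y x)
    (hUbdd : ∀ x y, |U x y| ≤ 2 * B)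
    (hUmarg : ∀ x, (∫⁻ y, ENNReal.ofReal |U x y| ∂μ) ≤ ENNReal.ofReal (2 * D))
    (h : Ω → ℝ) (hh : Measurable h) (hh01 : ∀ x, h x ∈ Set.Icc (0:ℝ) 1)
    (hhr : (∫⁻ x, ENNReal.ofReal (1 - h x) ∂μ) ≤ ENNReal.ofReal r) :
    kernelNorm μ U ≤
      kernelNorm (μ.withDensity fun x => ENNReal.ofReal (h x)) U
        + 4 * Real.sqrt (B * D * r) := by
  set ν := μ.withDensity fun x => ENNReal.ofReal (h x) with hνdef
  have hνμ : ν ≤ μ := by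
    refine Measure.le_iff.mpr fun s hs => ?_
    rw [hνdef, withDensity_apply _ hs]
    calc ∫⁻ x in s, ENNReal.ofReal (h x) ∂μ
        ≤ ∫⁻ _ in s, 1 ∂μ := lintegral_mono fun x => ENNReal.ofReal_le_one.mpr (hh01 x).2
      _ = μ s := by simp
  have hsym_abs : ∀ x y, |U x y| = |U y x| := fun x y => by rw [hsymm]
  have hUmargy : ∀ y, (∫⁻ x, ENNReal.ofReal |U x y| ∂μ) ≤ ENNReal.ofReal (2 * D) := by
    intro y
    calc ∫⁻ x, ENNReal.ofReal |U x y| ∂μ = ∫⁻ x, ENNReal.ofReal |U y x| ∂μ :=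
        lintegral_congr fun x => by rw [hsym_abs]
      _ ≤ _ := hUmarg y
  have hmargνx : ∀ x, (∫⁻ y, ENNReal.ofReal |U x y| ∂ν) ≤ ENNReal.ofReal (2 * D) :=
    fun x => le_trans (lintegral_mono' hνμ le_rfl) (hUmarg x)
  have hmargνy : ∀ y, (∫⁻ x, ENNReal.ofReal |U x y| ∂ν) ≤ ENNReal.ofReal (2 * D) :=
    fun y => le_trans (lintegral_mono' hνμ le_rfl) (hUmargy y)
  have hK0 : 0 ≤ kernelNorm ν U := kernelNorm_nonneg ν U
  have hsq : 0 ≤ Real.sqrt (B*D*r) := Real.sqrt_nonneg _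
  -- Bounded above for the ν-set
  have hbddν : BddAbove {s : ℝ | ∃ f g : Ω → ℝ, Measurable f ∧ Measurable g ∧
      eLpNorm f 2 ν = 1 ∧ eLpNorm g 2 ν = 1 ∧
      s = ∫ x, ∫ y, f x * U x y * g y ∂ν ∂ν} := by
    refine ⟨2*D, ?_⟩
    rintro s ⟨F, G, hFm, hGm, hF1, hG1, rfl⟩
    have hF2 := lem_elp hF1
    have hG2 := lem_elp hG1
    have hFUG : Measurable (Function.uncurry fun x y => F x * U x y * G y) :=
      (((hFm.comp measurable_fst).mul hmeas).mul (hGm.comp measurable_snd))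
    have hpFm : Measurable fun x => ENNReal.ofReal |F x| :=
      ENNReal.measurable_ofReal.comp hFm.abs
    have hpGm : Measurable fun x => ENNReal.ofReal |G x| :=
      ENNReal.measurable_ofReal.comp hGm.abs
    have hbound : ∫⁻ x, ∫⁻ y, ENNReal.ofReal |F x * U x y * G y| ∂ν ∂ν
        ≤ ENNReal.ofReal (2*D) := by
      have heq : ∀ x, ∫⁻ y, ENNReal.ofReal |F x * U x y * G y| ∂ν
          = ENNReal.ofReal |F x| * ∫⁻ y, ENNReal.ofReal |U x y| * ENNReal.ofReal |G y| ∂ν := by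
        intro x
        rw [← lintegral_const_mul' _ _ ofReal_ne_top]
        refine lintegral_congr fun y => ?_
        rw [abs_mul, abs_mul, ENNReal.ofReal_mul (by positivity),
          ENNReal.ofReal_mul (abs_nonneg _), mul_assoc]
      calc ∫⁻ x, ∫⁻ y, ENNReal.ofReal |F x * U x y * G y| ∂ν ∂ν
          = ∫⁻ x, ENNReal.ofReal |F x| *
              ∫⁻ y, ENNReal.ofReal |U x y| * ENNReal.ofReal |G y| ∂ν ∂ν :=
            lintegral_congr heq
        _ ≤ ENNReal.ofReal (2*D) :=
            lem_master hmeas hmargνx hmargνy hpFm hpGm hF2.le hG2.le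
    have habs := lem_abs_iint hFUG ofReal_ne_top hbound
    rw [ENNReal.toReal_ofReal (by linarith)] at habs
    exact (abs_le.mp habs).2
  have key : ∀ f g : Ω → ℝ, Measurable f → Measurable g →
      eLpNorm f 2 μ = 1 → eLpNorm g 2 μ = 1 →
      (∫ x, ∫ y, f x * U x y * g y ∂μ ∂μ) ≤ kernelNorm ν U + 4 * Real.sqrt (B*D*r) := by
    intro f g hfm hgm hf1 hg1
    have hpf2 := lem_elp hf1
    have hpg2 := lem_elp hg1
    set pf : Ω → ℝ≥0∞ := fun x => ENNReal.ofReal |f x| with hpfdef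
    set pg : Ω → ℝ≥0∞ := fun x => ENNReal.ofReal |g x| with hpgdef
    set pw : Ω → ℝ≥0∞ := fun x => ENNReal.ofReal (1 - h x) with hpwdef
    have hpfm : Measurable pf := ENNReal.measurable_ofReal.comp hfm.abs
    have hpgm : Measurable pg := ENNReal.measurable_ofReal.comp hgm.abs
    have hpwm : Measurable pw := ENNReal.measurable_ofReal.comp (measurable_const.sub hh)
    have hw0 : ∀ x, 0 ≤ 1 - h x := fun x => by have := (hh01 x).2; linarith
    have hw1' : ∀ x, 1 - h x ≤ 1 := fun x => by have := (hh01 x).1; linarith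
    have hpw1 : ∀ x, pw x ≤ 1 := fun x => ENNReal.ofReal_le_one.mpr (hw1' x)
    set φ1 : Ω → Ω → ℝ := fun x y => (f x * h x) * U x y * (g y * h y) with hφ1
    set φ2 : Ω → Ω → ℝ := fun x y => (f x * (1 - h x)) * U x y * g y with hφ2
    set φ3 : Ω → Ω → ℝ := fun x y => (f x * h x) * U x y * (g y * (1 - h y)) with hφ3
    have hsplit : ∀ x y, f x * U x y * g y = φ1 x y + φ2 x y + φ3 x y := by
      intro x y; simp only [hφ1, hφ2, hφ3]; ring
    have hφ1m : Measurable (Function.uncurry φ1) :=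
      (((hfm.comp measurable_fst).mul (hh.comp measurable_fst)).mul hmeas).mul
        ((hgm.comp measurable_snd).mul (hh.comp measurable_snd))
    have hφ2m : Measurable (Function.uncurry φ2) :=
      (((hfm.comp measurable_fst).mul
        ((measurable_const.sub hh).comp measurable_fst)).mul hmeas).mul
        (hgm.comp measurable_snd)
    have hφ3m : Measurable (Function.uncurry φ3) :=
      (((hfm.comp measurable_fst).mul (hh.comp measurable_fst)).mul hmeas).mul
        ((hgm.comp measurable_snd).mul ((measurable_const.sub hh).comp measurable_snd))
    have habs1 : ∀ x y, |φ1 x y| ≤ |f x| * (|U x y| * |g y|) := by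
      intro x y
      have e : |φ1 x y| = |f x| * |h x| * |U x y| * (|g y| * |h y|) := by
        simp only [hφ1, abs_mul]
      rw [e]
      have h1 : |h x| ≤ 1 := abs_le.mpr ⟨by linarith [(hh01 x).1], (hh01 x).2⟩
      have h2 : |h y| ≤ 1 := abs_le.mpr ⟨by linarith [(hh01 y).1], (hh01 y).2⟩
      calc |f x| * |h x| * |U x y| * (|g y| * |h y|)
          ≤ |f x| * 1 * |U x y| * (|g y| * 1) := by
            gcongr <;> positivity
        _ = |f x| * (|U x y| * |g y|) := by ring
    have habs2 : ∀ x y, |φ2 x y| ≤ |f x| * (|U x y| * |g y|) := by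
      intro x y
      have e : |φ2 x y| = |f x| * |1 - h x| * |U x y| * |g y| := by
        simp only [hφ2, abs_mul]
      rw [e]
      have h1 : |1 - h x| ≤ 1 := abs_le.mpr ⟨by linarith [(hh01 x).2], by linarith [(hh01 x).1]⟩
      calc |f x| * |1 - h x| * |U x y| * |g y|
          ≤ |f x| * 1 * |U x y| * |g y| := by gcongr <;> positivity
        _ = |f x| * (|U x y| * |g y|) := by ring
    have habs3 : ∀ x y, |φ3 x y| ≤ |f x| * (|U x y| * |g y|) := by
      intro x y
      have e : |φ3 x y| = |f x| * |h x| * |U x y| * (|g y| * |1 - h y|) := by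
        simp only [hφ3, abs_mul]
      rw [e]
      have h1 : |h x| ≤ 1 := abs_le.mpr ⟨by linarith [(hh01 x).1], (hh01 x).2⟩
      have h2 : |1 - h y| ≤ 1 := abs_le.mpr ⟨by linarith [(hh01 y).2], by linarith [(hh01 y).1]⟩
      calc |f x| * |h x| * |U x y| * (|g y| * |1 - h y|)
          ≤ |f x| * 1 * |U x y| * (|g y| * 1) := by gcongr <;> positivity
        _ = |f x| * (|U x y| * |g y|) := by ring
    -- the inner lintegral bound
    have hQ : ∀ x, ∫⁻ y, ENNReal.ofReal |U x y| * pg y ∂μ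
        ≤ (ENNReal.ofReal (2*B) * ENNReal.ofReal (2*D)) ^ (1/2:ℝ) :=
      lem_inner hmeas hUbdd hUmarg hpgm hpg2.le
    have hQtop : ∀ x, (∫⁻ y, ENNReal.ofReal |U x y| * pg y ∂μ) ≠ ⊤ := fun x =>
      ne_top_of_le_ne_top (ENNReal.rpow_ne_top_of_nonneg (by norm_num)
        (ENNReal.mul_ne_top ofReal_ne_top ofReal_ne_top)) (hQ x)
    have hlint : ∀ (φ : Ω → Ω → ℝ), (∀ x y, |φ x y| ≤ |f x| * (|U x y| * |g y|)) →
        ∀ x, (∫⁻ y, ENNReal.ofReal |φ x y| ∂μ)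
          ≤ pf x * ∫⁻ y, ENNReal.ofReal |U x y| * pg y ∂μ := by
      intro φ hle x
      calc ∫⁻ y, ENNReal.ofReal |φ x y| ∂μ
          ≤ ∫⁻ y, pf x * (ENNReal.ofReal |U x y| * pg y) ∂μ := by
            refine lintegral_mono fun y => ?_
            calc ENNReal.ofReal |φ x y|
                ≤ ENNReal.ofReal (|f x| * (|U x y| * |g y|)) :=
                  ENNReal.ofReal_le_ofReal (hle x y)
              _ = pf x * (ENNReal.ofReal |U x y| * pg y) := by
                  rw [ENNReal.ofReal_mul (abs_nonneg _), ENNReal.ofReal_mul (abs_nonneg _)]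
        _ = pf x * ∫⁻ y, ENNReal.ofReal |U x y| * pg y ∂μ :=
            lintegral_const_mul' _ _ ofReal_ne_top
    have hinty : ∀ (φ : Ω → Ω → ℝ), Measurable (Function.uncurry φ) →
        (∀ x y, |φ x y| ≤ |f x| * (|U x y| * |g y|)) → ∀ x, Integrable (φ x) μ := by
      intro φ hφm hle x
      refine ⟨(hφm.of_uncurry_left).aestronglyMeasurable, ?_⟩
      rw [hasFiniteIntegral_def]
      have : ∫⁻ y, ‖φ x y‖ₑ ∂μ = ∫⁻ y, ENNReal.ofReal |φ x y| ∂μ :=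
        lintegral_congr fun y => Real.enorm_eq_ofReal_abs _
      rw [this]
      exact ((hlint φ hle x).trans_lt
        (ENNReal.mul_lt_top ofReal_lt_top (hQtop x).lt_top))
    have houter : ∀ (φ : Ω → Ω → ℝ), Measurable (Function.uncurry φ) →
        (∀ x y, |φ x y| ≤ |f x| * (|U x y| * |g y|)) →
        Integrable (fun x => ∫ y, φ x y ∂μ) μ := by
      intro φ hφm hle
      refine ⟨hφm.stronglyMeasurable.integral_prod_right'.aestronglyMeasurable, ?_⟩
      rw [hasFiniteIntegral_def]
      have hptw : ∀ x, ‖∫ y, φ x y ∂μ‖ₑ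
          ≤ pf x * ∫⁻ y, ENNReal.ofReal |U x y| * pg y ∂μ := by
        intro x
        rw [Real.enorm_eq_ofReal_abs]
        exact (ofReal_abs_integral_le
          (hφm.of_uncurry_left).aestronglyMeasurable).trans (hlint φ hle x)
      calc ∫⁻ x, ‖∫ y, φ x y ∂μ‖ₑ ∂μ
          ≤ ∫⁻ x, pf x * ∫⁻ y, ENNReal.ofReal |U x y| * pg y ∂μ ∂μ := lintegral_mono hptw
        _ ≤ ENNReal.ofReal (2*D) :=
            lem_master hmeas hUmarg hUmargy hpfm hpgm hpf2.le hpg2.le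
        _ < ⊤ := ofReal_lt_top
    -- split the double integral
    have hI : ∫ x, ∫ y, f x * U x y * g y ∂μ ∂μ
        = (∫ x, ∫ y, φ1 x y ∂μ ∂μ) + (∫ x, ∫ y, φ2 x y ∂μ ∂μ) + (∫ x, ∫ y, φ3 x y ∂μ ∂μ) := by
      have hx : ∀ x, ∫ y, f x * U x y * g y ∂μ
          = (∫ y, φ1 x y ∂μ) + (∫ y, φ2 x y ∂μ) + (∫ y, φ3 x y ∂μ) := by
        intro x
        have i1 := hinty φ1 hφ1m habs1 x
        have i2 := hinty φ2 hφ2m habs2 x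
        have i3 := hinty φ3 hφ3m habs3 x
        have i12 : Integrable (fun y => φ1 x y + φ2 x y) μ := i1.add i2
        calc ∫ y, f x * U x y * g y ∂μ = ∫ y, (φ1 x y + φ2 x y) + φ3 x y ∂μ :=
              integral_congr_ae (Filter.Eventually.of_forall fun y => hsplit x y)
          _ = (∫ y, φ1 x y + φ2 x y ∂μ) + ∫ y, φ3 x y ∂μ := integral_add i12 i3
          _ = _ := by rw [integral_add i1 i2]
      have o1 := houter φ1 hφ1m habs1
      have o2 := houter φ2 hφ2m habs2
      have o3 := houter φ3 hφ3m habs3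
      have o12 : Integrable (fun x => (∫ y, φ1 x y ∂μ) + (∫ y, φ2 x y ∂μ)) μ := o1.add o2
      calc ∫ x, ∫ y, f x * U x y * g y ∂μ ∂μ
          = ∫ x, ((∫ y, φ1 x y ∂μ) + (∫ y, φ2 x y ∂μ)) + (∫ y, φ3 x y ∂μ) ∂μ :=
            integral_congr_ae (Filter.Eventually.of_forall hx)
        _ = (∫ x, (∫ y, φ1 x y ∂μ) + (∫ y, φ2 x y ∂μ) ∂μ) + ∫ x, ∫ y, φ3 x y ∂μ ∂μ :=
            integral_add o12 o3
        _ = _ := by rw [integral_add o1 o2]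
    -- bound for φ2
    have hT2 : |∫ x, ∫ y, φ2 x y ∂μ ∂μ| ≤ 2 * Real.sqrt (B*D*r) := by
      have hb : ∫⁻ x, ∫⁻ y, ENNReal.ofReal |φ2 x y| ∂μ ∂μ
          ≤ ENNReal.ofReal (2 * Real.sqrt (B*D*r)) := by
        have heq : ∀ x, ∫⁻ y, ENNReal.ofReal |φ2 x y| ∂μ
            = (pf x * pw x) * ∫⁻ y, ENNReal.ofReal |U x y| * pg y ∂μ := by
          intro x
          rw [← lintegral_const_mul' _ _ (ENNReal.mul_ne_top ofReal_ne_top ofReal_ne_top)]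
          refine lintegral_congr fun y => ?_
          have e : |φ2 x y| = |f x| * (1 - h x) * (|U x y| * |g y|) := by
            simp only [hφ2, abs_mul, abs_of_nonneg (hw0 x)]; ring
          rw [e, ENNReal.ofReal_mul (mul_nonneg (abs_nonneg _) (hw0 x)),
            ENNReal.ofReal_mul (abs_nonneg _), ENNReal.ofReal_mul (abs_nonneg _)]
        calc ∫⁻ x, ∫⁻ y, ENNReal.ofReal |φ2 x y| ∂μ ∂μ
            = ∫⁻ x, (pf x * pw x) * ∫⁻ y, ENNReal.ofReal |U x y| * pg y ∂μ ∂μ :=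
              lintegral_congr heq
          _ ≤ _ := lem_cross hB hD hr hmeas hUbdd hUmarg hpfm hpgm hpwm
              hpf2.le hpg2.le hpw1 hhr
      have := lem_abs_iint hφ2m ofReal_ne_top hb
      rwa [ENNReal.toReal_ofReal (by positivity)] at this
    -- bound for φ3
    have hT3 : |∫ x, ∫ y, φ3 x y ∂μ ∂μ| ≤ 2 * Real.sqrt (B*D*r) := by
      have hb : ∫⁻ x, ∫⁻ y, ENNReal.ofReal |φ3 x y| ∂μ ∂μ
          ≤ ENNReal.ofReal (2 * Real.sqrt (B*D*r)) := by
        have hle3 : ∀ x y, ENNReal.ofReal |φ3 x y|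
            ≤ pf x * (ENNReal.ofReal |U x y| * (pg y * pw y)) := by
          intro x y
          have h1 : |φ3 x y| ≤ |f x| * (|U x y| * (|g y| * (1 - h y))) := by
            have e : |φ3 x y| = |f x| * |h x| * |U x y| * (|g y| * (1 - h y)) := by
              simp only [hφ3, abs_mul, abs_of_nonneg (hw0 y)]
            rw [e]
            have h2 : |h x| ≤ 1 := abs_le.mpr ⟨by linarith [(hh01 x).1], (hh01 x).2⟩
            calc |f x| * |h x| * |U x y| * (|g y| * (1 - h y))
                ≤ |f x| * 1 * |U x y| * (|g y| * (1 - h y)) := by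
                  refine mul_le_mul_of_nonneg_right (mul_le_mul_of_nonneg_right ?_ (abs_nonneg _))
                    (mul_nonneg (abs_nonneg _) (hw0 y))
                  exact mul_le_mul_of_nonneg_left h2 (abs_nonneg _)
              _ = |f x| * (|U x y| * (|g y| * (1 - h y))) := by ring
          calc ENNReal.ofReal |φ3 x y|
              ≤ ENNReal.ofReal (|f x| * (|U x y| * (|g y| * (1 - h y)))) :=
                ENNReal.ofReal_le_ofReal h1
            _ = pf x * (ENNReal.ofReal |U x y| * (pg y * pw y)) := by
                rw [ENNReal.ofReal_mul (abs_nonneg _), ENNReal.ofReal_mul (abs_nonneg _),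
                  ENNReal.ofReal_mul (abs_nonneg _)]
        calc ∫⁻ x, ∫⁻ y, ENNReal.ofReal |φ3 x y| ∂μ ∂μ
            ≤ ∫⁻ x, ∫⁻ y, pf x * (ENNReal.ofReal |U x y| * (pg y * pw y)) ∂μ ∂μ :=
              lintegral_mono fun x => lintegral_mono fun y => hle3 x y
          _ = ∫⁻ y, ∫⁻ x, pf x * (ENNReal.ofReal |U x y| * (pg y * pw y)) ∂μ ∂μ := by
              refine lintegral_lintegral_swap ?_
              refine Measurable.aemeasurable ?_
              exact (hpfm.comp measurable_fst).mul
                ((ENNReal.measurable_ofReal.comp hmeas.abs).mul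
                  ((hpgm.comp measurable_snd).mul (hpwm.comp measurable_snd)))
          _ = ∫⁻ y, (pg y * pw y) * ∫⁻ x, ENNReal.ofReal |U y x| * pf x ∂μ ∂μ := by
              refine lintegral_congr fun y => ?_
              rw [← lintegral_const_mul' _ _ (ENNReal.mul_ne_top ofReal_ne_top ofReal_ne_top)]
              refine lintegral_congr fun x => ?_
              rw [hsym_abs y x]; ring
          _ ≤ _ := lem_cross hB hD hr hmeas hUbdd hUmarg hpgm hpfm hpwm
              hpg2.le hpf2.le hpw1 hhr
      have := lem_abs_iint hφ3m ofReal_ne_top hb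
      rwa [ENNReal.toReal_ofReal (by positivity)] at this
    -- the ν-term
    have hdens : ∀ F : Ω → ℝ, ∫ z, F z ∂ν = ∫ z, h z * F z ∂μ := by
      intro F
      rw [hνdef,
        show (fun x => ENNReal.ofReal (h x)) = fun x => ((h x).toNNReal : ℝ≥0∞) from rfl,
        integral_withDensity_eq_integral_smul hh.real_toNNReal F]
      refine integral_congr_ae (Filter.Eventually.of_forall fun z => ?_)
      simp [NNReal.smul_def, Real.coe_toNNReal _ (hh01 z).1]
    have hA : (∫ x, ∫ y, φ1 x y ∂μ ∂μ) = ∫ x, ∫ y, f x * U x y * g y ∂ν ∂ν := by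
      have h1 : ∫ x, ∫ y, f x * U x y * g y ∂ν ∂ν
          = ∫ x, h x * (∫ y, h y * (f x * U x y * g y) ∂μ) ∂μ := by
        rw [hdens]
        refine integral_congr_ae (Filter.Eventually.of_forall fun x => ?_)
        beta_reduce
        rw [hdens]
      have h2 : ∫ x, ∫ y, φ1 x y ∂μ ∂μ
          = ∫ x, h x * (∫ y, h y * (f x * U x y * g y) ∂μ) ∂μ := by
        refine integral_congr_ae (Filter.Eventually.of_forall fun x => ?_)
        beta_reduce
        rw [← integral_const_mul]
        refine integral_congr_ae (Filter.Eventually.of_forall fun y => ?_)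
        beta_reduce
        simp only [hφ1]; ring
      rw [h2, h1]
    have hAle : (∫ x, ∫ y, f x * U x y * g y ∂ν ∂ν) ≤ kernelNorm ν U := by
      by_cases hg0 : eLpNorm g 2 ν = 0
      · have hg0' : g =ᵐ[ν] 0 :=
          (eLpNorm_eq_zero_iff hgm.aestronglyMeasurable (by norm_num)).mp hg0
        have hz : ∀ x, ∫ y, f x * U x y * g y ∂ν = 0 := by
          intro x
          refine integral_eq_zero_of_ae ?_
          filter_upwards [hg0'] with y hy
          simp [hy]
        calc ∫ x, ∫ y, f x * U x y * g y ∂ν ∂ν = ∫ (_ : Ω), (0:ℝ) ∂ν :=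
            integral_congr_ae (Filter.Eventually.of_forall hz)
          _ = 0 := integral_zero _ _
          _ ≤ _ := hK0
      by_cases hf0 : eLpNorm f 2 ν = 0
      · have hf0' : f =ᵐ[ν] 0 :=
          (eLpNorm_eq_zero_iff hfm.aestronglyMeasurable (by norm_num)).mp hf0
        have hzz : ∫ x, ∫ y, f x * U x y * g y ∂ν ∂ν = ∫ (_ : Ω), (0:ℝ) ∂ν := by
          refine integral_congr_ae ?_
          filter_upwards [hf0'] with x hx
          simp [hx]
        calc ∫ x, ∫ y, f x * U x y * g y ∂ν ∂ν = ∫ (_ : Ω), (0:ℝ) ∂ν := hzz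
          _ = 0 := integral_zero _ _
          _ ≤ _ := hK0
      · set a := eLpNorm f 2 ν with hadef
        set b := eLpNorm g 2 ν with hbdef
        have ha1 : a ≤ 1 := le_of_le_of_eq (eLpNorm_mono_measure f hνμ) hf1
        have hb1 : b ≤ 1 := le_of_le_of_eq (eLpNorm_mono_measure g hνμ) hg1
        have hat : a ≠ ⊤ := (ha1.trans_lt one_lt_top).ne
        have hbt : b ≠ ⊤ := (hb1.trans_lt one_lt_top).ne
        set ca := a.toReal with hcadef
        set cb := b.toReal with hcbdef
        have hca0 : 0 < ca := ENNReal.toReal_pos hf0 hat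
        have hcb0 : 0 < cb := ENNReal.toReal_pos hg0 hbt
        have hca1 : ca ≤ 1 := by
          have := ENNReal.toReal_mono one_ne_top ha1
          simpa using this
        have hcb1 : cb ≤ 1 := by
          have := ENNReal.toReal_mono one_ne_top hb1
          simpa using this
        set F : Ω → ℝ := fun x => ca⁻¹ * f x with hFdef
        set G : Ω → ℝ := fun x => cb⁻¹ * g x with hGdef
        have hFm : Measurable F := hfm.const_mul _
        have hGm : Measurable G := hgm.const_mul _
        have hnormF : eLpNorm F 2 ν = 1 := by
          have : F = (ca⁻¹ : ℝ) • f := rfl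
          rw [this, eLpNorm_const_smul]
          rw [show ‖(ca⁻¹ : ℝ)‖ₑ = ENNReal.ofReal ca⁻¹ by
            rw [Real.enorm_eq_ofReal_abs, abs_of_nonneg (by positivity)]]
          rw [← hadef, show a = ENNReal.ofReal ca from (ENNReal.ofReal_toReal hat).symm,
            ← ENNReal.ofReal_mul (by positivity), inv_mul_cancel₀ hca0.ne']
          simp
        have hnormG : eLpNorm G 2 ν = 1 := by
          have : G = (cb⁻¹ : ℝ) • g := rfl
          rw [this, eLpNorm_const_smul]
          rw [show ‖(cb⁻¹ : ℝ)‖ₑ = ENNReal.ofReal cb⁻¹ by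
            rw [Real.enorm_eq_ofReal_abs, abs_of_nonneg (by positivity)]]
          rw [← hbdef, show b = ENNReal.ofReal cb from (ENNReal.ofReal_toReal hbt).symm,
            ← ENNReal.ofReal_mul (by positivity), inv_mul_cancel₀ hcb0.ne']
          simp
        set J := ∫ x, ∫ y, F x * U x y * G y ∂ν ∂ν with hJdef
        have hJmem : J ∈ {s : ℝ | ∃ f g : Ω → ℝ, Measurable f ∧ Measurable g ∧
            eLpNorm f 2 ν = 1 ∧ eLpNorm g 2 ν = 1 ∧
            s = ∫ x, ∫ y, f x * U x y * g y ∂ν ∂ν} :=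
          ⟨F, G, hFm, hGm, hnormF, hnormG, rfl⟩
        have hJle : J ≤ kernelNorm ν U := le_csSup hbddν hJmem
        have hAJ : (∫ x, ∫ y, f x * U x y * g y ∂ν ∂ν) = (ca * cb) * J := by
          rw [hJdef, ← integral_const_mul]
          refine integral_congr_ae (Filter.Eventually.of_forall fun x => ?_)
          beta_reduce
          rw [← integral_const_mul]
          refine integral_congr_ae (Filter.Eventually.of_forall fun y => ?_)
          beta_reduce
          simp only [hFdef, hGdef]
          field_simp
        rw [hAJ]
        rcases le_or_gt J 0 with hJ0 | hJ0
        · exact le_trans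
            (mul_nonpos_of_nonneg_of_nonpos (mul_nonneg hca0.le hcb0.le) hJ0) hK0
        · have hcc : ca * cb ≤ 1 := by nlinarith
          have h1J : (ca * cb) * J ≤ 1 * J := mul_le_mul_of_nonneg_right hcc hJ0.le
          rw [one_mul] at h1J
          exact h1J.trans hJle
    -- finish
    have h2 := (abs_le.mp hT2).2
    have h3 := (abs_le.mp hT3).2
    rw [hI]
    rw [hA]
    linarith
  -- conclude
  refine Real.sSup_le ?_ (add_nonneg hK0 (by positivity))
  rintro s ⟨f, g, hfm, hgm, hf1, hg1, rfl⟩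
  exact key f g hfm hgm hf1 hg1
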